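/- For formal power series in x: if y = y(x) is the formal power series solution of y(1-y)^\tau = x with y(0) = 0 (where \tau is a formal parameter), then y = \sum_{k ≥ 1} (\prod_{a=0}^{k-2} (k\tau + a) / k!) x^k. -/

import Mathlib

open PowerSeries

/-- `(1+u)^τ := ∑_n binom(τ,n) u^n`, the formal binomial power, well defined for any
power series `u` with zero constant term. -/
noncomputable def binomPow {K : Type*} [Field K] (τ : K) (u : PowerSeries K) :
    PowerSeries K :=
  PowerSeries.mk fun m => ∑ n ∈ Finset.range (m + 1),
    ((∏ a ∈ Finset.range n, (τ - (a : K))) / (Nat.factorial n : K)) *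
      PowerSeries.coeff m (u ^ n)

set_option linter.unusedSectionVars false

section Aux
open Finset

instance : CharZero (RatFunc ℚ) :=
  charZero_of_injective_algebraMap (algebraMap ℚ (RatFunc ℚ)).injective



set_option linter.unusedSectionVars false
variable {K : Type*} [Field K] [CharZero K]

/-- generalized binomial coefficient -/
noncomputable def bc (σ : K) (n : ℕ) : K :=
  (∏ a ∈ Finset.range n, (σ - (a : K))) / (Nat.factorial n : K)

lemma prod_sub_eq_smeval (σ : K) (n : ℕ) :
    (∏ a ∈ Finset.range n, (σ - (a:K))) = (descPochhammer ℤ n).smeval σ := by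
  induction n with
  | zero => simp [descPochhammer_zero, Polynomial.smeval_one]
  | succ n ih =>
      rw [Finset.prod_range_succ, descPochhammer_succ_right, Polynomial.smeval_mul, ← ih]
      simp [Polynomial.smeval_sub, Polynomial.smeval_X, Polynomial.smeval_natCast]

lemma bc_eq_choose (σ : K) (n : ℕ) : bc σ n = Ring.choose σ n := by
  have h := Ring.descPochhammer_eq_factorial_smul_choose (R := K) σ n
  have hf : ((Nat.factorial n : K)) ≠ 0 := Nat.cast_ne_zero.mpr (Nat.factorial_ne_zero n)
  rw [bc, prod_sub_eq_smeval, h, nsmul_eq_mul]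
  exact mul_div_cancel_left₀ _ hf

lemma bc_vandermonde (σ ρ : K) (n : ℕ) :
    ∑ ij ∈ Finset.HasAntidiagonal.antidiagonal n, bc σ ij.1 * bc ρ ij.2 = bc (σ + ρ) n := by
  simp only [bc_eq_choose]
  exact (Ring.add_choose_eq n (Commute.all _ _)).symm

lemma bc_zero_left (n : ℕ) (hn : n ≠ 0) : bc (0 : K) n = 0 := by
  rw [bc, Finset.prod_eq_zero (Finset.mem_range.mpr (Nat.pos_of_ne_zero hn)) (by simp), zero_div]

lemma bc_zero_right (σ : K) : bc σ 0 = 1 := by simp [bc]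


section BP
variable {u : PowerSeries K}

lemma coeff_pow_eq_zero (hu : constantCoeff u = 0) {m n : ℕ} (h : m < n) :
    coeff m (u ^ n) = 0 :=
  X_pow_dvd_iff.mp (pow_dvd_pow_of_dvd (X_dvd_iff.mpr hu) n) m h

lemma coeff_binomPow (hu : constantCoeff u = 0) (σ : K) {m M : ℕ} (h : m < M) :
    coeff m (binomPow σ u) = ∑ n ∈ Finset.range M, bc σ n * coeff m (u ^ n) := by
  rw [binomPow, coeff_mk]
  simp only [bc]
  refine Finset.sum_subset (Finset.range_subset_range.mpr h) fun x hx hnx => ?_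
  have : m < x := by
    rcases Nat.lt_or_ge x (m+1) with h'|h'
    · exact absurd (Finset.mem_range.mpr h') hnx
    · omega
  rw [coeff_pow_eq_zero hu this, mul_zero]

lemma constantCoeff_binomPow (hu : constantCoeff u = 0) (σ : K) :
    constantCoeff (binomPow σ u) = 1 := by
  have := coeff_binomPow hu σ (Nat.lt_succ_self 0)
  rw [← coeff_zero_eq_constantCoeff_apply, this]
  simp [bc_zero_right]

lemma binomPow_zero_exp (hu : constantCoeff u = 0) : binomPow (0:K) u = 1 := by
  ext m
  rw [coeff_binomPow hu 0 (Nat.lt_succ_self m)]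
  rw [Finset.sum_eq_single 0]
  · simp [bc_zero_right]
  · intro n _ hn; rw [bc_zero_left n hn, zero_mul]
  · intro h; simp at h

lemma binomPow_mul (hu : constantCoeff u = 0) (σ ρ : K) :
    binomPow σ u * binomPow ρ u = binomPow (σ + ρ) u := by
  ext m
  set M := m + 1 with hM
  have hS : ∀ (χ : K) (p : ℕ), p < M →
      coeff p (binomPow χ u) = coeff p (∑ n ∈ Finset.range M, C (bc χ n) * u ^ n) := by
    intro χ p hp
    rw [coeff_binomPow hu χ hp, map_sum]
    exact Finset.sum_congr rfl fun n _ => by rw [coeff_C_mul]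
  have key : coeff m (binomPow σ u * binomPow ρ u) =
      coeff m ((∑ n ∈ Finset.range M, C (bc σ n) * u ^ n) *
        (∑ n ∈ Finset.range M, C (bc ρ n) * u ^ n)) := by
    rw [coeff_mul, coeff_mul]
    refine Finset.sum_congr rfl fun p hp => ?_
    have h1 : p.1 < M := lt_of_le_of_lt (Finset.HasAntidiagonal.antidiagonal.fst_le hp) (Nat.lt_succ_self m)
    have h2 : p.2 < M := lt_of_le_of_lt (Finset.HasAntidiagonal.antidiagonal.snd_le hp) (Nat.lt_succ_self m)
    rw [hS σ p.1 h1, hS ρ p.2 h2]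
  rw [key, Finset.sum_mul_sum]
  -- LHS: ∑_{i<M} ∑_{j<M} coeff m (C bcσi * u^i * (C bcρj * u^j))
  have hL : coeff m ((∑ i ∈ Finset.range M, ∑ j ∈ Finset.range M,
        (C (bc σ i) * u ^ i) * (C (bc ρ j) * u ^ j))) =
      ∑ p ∈ Finset.range M ×ˢ Finset.range M,
        bc σ p.1 * bc ρ p.2 * coeff m (u ^ (p.1 + p.2)) := by
    rw [← Finset.sum_product']
    rw [map_sum]
    refine Finset.sum_congr rfl fun p _ => ?_
    rw [mul_mul_mul_comm, ← map_mul, ← pow_add, coeff_C_mul]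
  rw [hL]
  -- RHS
  rw [coeff_binomPow hu _ (Nat.lt_succ_self m)]
  have hR : ∑ k ∈ Finset.range M, bc (σ + ρ) k * coeff m (u ^ k) =
      ∑ k ∈ Finset.range M, ∑ p ∈ Finset.HasAntidiagonal.antidiagonal k,
        bc σ p.1 * bc ρ p.2 * coeff m (u ^ (p.1 + p.2)) := by
    refine Finset.sum_congr rfl fun k _ => ?_
    rw [← bc_vandermonde σ ρ k, Finset.sum_mul]
    refine Finset.sum_congr rfl fun p hp => ?_
    rw [Finset.HasAntidiagonal.mem_antidiagonal] at hp
    rw [hp]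
  rw [hR]
  -- now equate double sums
  rw [← Finset.sum_biUnion (f := fun p : ℕ × ℕ => bc σ p.1 * bc ρ p.2 * coeff m (u ^ (p.1 + p.2)))
    (by
      intro a _ b _ hab
      simp only [Function.onFun, Finset.disjoint_left]
      intro p hpa hpb
      rw [Finset.HasAntidiagonal.mem_antidiagonal] at hpa hpb
      exact hab (hpa ▸ hpb))]
  refine (Finset.sum_subset ?_ ?_).symm
  · intro p hp
    rw [Finset.mem_biUnion] at hp
    obtain ⟨k, hk, hpk⟩ := hp
    rw [Finset.HasAntidiagonal.mem_antidiagonal] at hpk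
    rw [Finset.mem_range] at hk
    rw [Finset.mem_product, Finset.mem_range, Finset.mem_range]
    omega
  · intro p _ hnp
    have : m < p.1 + p.2 := by
      by_contra h
      apply hnp
      rw [Finset.mem_biUnion]
      exact ⟨p.1 + p.2, Finset.mem_range.mpr (by omega),
        Finset.HasAntidiagonal.mem_antidiagonal.mpr rfl⟩
    rw [coeff_pow_eq_zero hu this, mul_zero]

lemma binomPow_pow (hu : constantCoeff u = 0) (σ : K) (k : ℕ) :
    binomPow σ u ^ k = binomPow ((k : K) * σ) u := by
  induction k with
  | zero => rw [pow_zero, Nat.cast_zero, zero_mul, binomPow_zero_exp hu]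
  | succ k ih =>
      rw [pow_succ, ih, binomPow_mul hu]
      push_cast
      ring_nf

end BP


end Aux

open Finset in
/-- **Lagrange inversion for the framed Lambert curve.**
If `y` is a formal power series with `y(0) = 0` satisfying `y(1-y)^τ = x`
(with `τ = RatFunc.X` a formal parameter), then
`y = ∑_{k ≥ 1} (∏_{a=0}^{k-2} (kτ + a)/k!) x^k`. -/
theorem lambert_series (y : PowerSeries (RatFunc ℚ))
    (h0 : PowerSeries.constantCoeff y = 0)
    (heq : y * binomPow (RatFunc.X) (-y) = PowerSeries.X) :
    y = PowerSeries.mk fun k =>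
      if k = 0 then 0 else
        (∏ a ∈ Finset.range (k - 1), ((k : RatFunc ℚ) * RatFunc.X + (a : RatFunc ℚ))) /
          (Nat.factorial k : RatFunc ℚ) := by
  classical
  set τ : RatFunc ℚ := RatFunc.X with hτdef
  have hmy : constantCoeff (-y) = 0 := by simp [h0]
  -- y = X * u
  obtain ⟨u, hyu⟩ : (X : (RatFunc ℚ)⟦X⟧) ∣ y := X_dvd_iff.mpr h0
  -- coeff 1 y = 1
  have h1 : coeff 1 y = 1 := by
    have h := congrArg (coeff 1) heq
    rw [coeff_mul] at h
    rw [show (Finset.HasAntidiagonal.antidiagonal 1 : Finset (ℕ × ℕ)) = {(0,1),(1,0)} from rfl] at h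
    rw [Finset.sum_insert (by decide), Finset.sum_singleton] at h
    simp only [coeff_zero_eq_constantCoeff, h0, zero_mul, zero_add,
      coeff_zero_eq_constantCoeff_apply] at h
    rw [constantCoeff_binomPow hmy, mul_one, coeff_one_X] at h
    exact h
  have hu1 : constantCoeff u = 1 := by
    have := h1
    rw [hyu, coeff_succ_X_mul, coeff_zero_eq_constantCoeff_apply] at this
    exact this
  have hune : constantCoeff u ≠ 0 := by rw [hu1]; exact one_ne_zero
  have huv : u * u⁻¹ = 1 := PowerSeries.mul_inv_cancel u hune
  have hvu : u⁻¹ * u = 1 := by rw [mul_comm]; exact huv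
  have hv1 : constantCoeff u⁻¹ = 1 := by
    have := congrArg (constantCoeff) huv
    rw [map_mul, hu1, one_mul, map_one] at this
    exact this
  set D := PowerSeries.derivative (R := RatFunc ℚ) with hDdef
  have hdy : D y = u + X * D u := by
    rw [hyu, Derivation.leibniz, derivative_X]
    rw [smul_eq_mul, smul_eq_mul, mul_one]
    ring
  -- the key residue-type lemma
  have M6 : ∀ m : ℕ, coeff m ((u⁻¹) ^ (m+1) * D y) =
      if m = 0 then 1 else 0 := by
    intro m
    cases m with
    | zero =>
        rw [if_pos rfl, pow_one, coeff_zero_eq_constantCoeff, map_mul, hv1, one_mul,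
          ← coeff_zero_eq_constantCoeff_apply, hDdef, coeff_derivative, h1]
        norm_num
    | succ M =>
        rw [if_neg (Nat.succ_ne_zero M)]
        have hvu2 : (u⁻¹) ^ (M+2) * u = (u⁻¹) ^ (M+1) := by
          rw [pow_succ, mul_assoc, hvu, mul_one]
        have hdv : D u⁻¹ = -(u⁻¹) ^ 2 * D u := PowerSeries.derivative_inv' u
        have hD1 : D ((u⁻¹) ^ (M+1)) =
            -(((M+1 : ℕ) : (RatFunc ℚ)⟦X⟧) * ((u⁻¹) ^ (M+2) * D u)) := by
          rw [Derivation.leibniz_pow, hdv]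
          simp only [Nat.add_sub_cancel, smul_eq_mul, nsmul_eq_mul]
          ring
        have hkey : ((M+1 : ℕ) : (RatFunc ℚ)⟦X⟧) * ((u⁻¹) ^ (M+2) * D y) =
            ((M+1 : ℕ) : (RatFunc ℚ)⟦X⟧) * (u⁻¹) ^ (M+1) - X * D ((u⁻¹) ^ (M+1)) := by
          rw [hdy, hD1, mul_add, ← hvu2]
          ring
        have hc := congrArg (coeff (M+1)) hkey
        have hnat : ((M+1 : ℕ) : (RatFunc ℚ)⟦X⟧) = C ((M+1 : ℕ) : RatFunc ℚ) := by
          rw [map_natCast]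
        rw [hnat] at hc
        rw [map_sub, coeff_C_mul, coeff_C_mul, coeff_succ_X_mul, hDdef,
          coeff_derivative] at hc
        have hz : ((M+1 : ℕ) : RatFunc ℚ) * coeff (M+1) ((u⁻¹) ^ (M+2) * D y)
            = 0 := by
          rw [hc]
          push_cast
          ring
        have hne : ((M+1 : ℕ) : RatFunc ℚ) ≠ 0 :=
          Nat.cast_ne_zero.mpr (Nat.succ_ne_zero M)
        exact (mul_eq_zero.mp hz).resolve_left hne
  -- main coefficient computation
  ext k
  rw [coeff_mk]
  rcases Nat.eq_zero_or_pos k with hk0 | hkpos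
  · subst hk0
    rw [if_pos rfl, coeff_zero_eq_constantCoeff_apply, h0]
  · set n := k with hn
    rw [if_neg (Nat.pos_iff_ne_zero.mp hkpos)]
    set σ : RatFunc ℚ := -((n : RatFunc ℚ) * τ) with hσ
    set B := binomPow σ (-y) with hB
    set A := binomPow ((n : RatFunc ℚ) * τ) (-y) with hA
    have hXn : (X : (RatFunc ℚ)⟦X⟧) ^ n = y ^ n * A := by
      rw [← heq, mul_pow, binomPow_pow hmy]
    have hAB : A * B = 1 := by
      rw [hA, hB, binomPow_mul hmy, hσ, add_neg_cancel, binomPow_zero_exp hmy]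
    have hyB : y ^ n = X ^ n * B := by
      rw [hXn, mul_assoc, hAB, mul_one]
    have huB : u ^ n = B := by
      have h2 : (X : (RatFunc ℚ)⟦X⟧) ^ n * u ^ n = X ^ n * B := by
        rw [← mul_pow, ← hyu, hyB]
      exact mul_left_cancel₀ (pow_ne_zero n X_ne_zero) h2
    set S := ∑ j ∈ Finset.range n, C (bc σ j) * (-y) ^ j with hS
    have hDdvd : (X : (RatFunc ℚ)⟦X⟧) ^ n ∣ (B - S) := by
      rw [X_pow_dvd_iff]
      intro m hm
      rw [map_sub, hB, coeff_binomPow hmy σ hm, hS, map_sum]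
      rw [sub_eq_zero]
      exact Finset.sum_congr rfl fun j _ => (coeff_C_mul _ _ _).symm
    obtain ⟨E, hE⟩ := hDdvd
    -- compute coeff (n-1) (D y)
    have hone : ((u⁻¹) ^ n * u ^ n : (RatFunc ℚ)⟦X⟧) = 1 := by
      rw [← mul_pow, hvu, one_pow]
    have hsplit : coeff (n-1) (D y) =
        coeff (n-1) ((u⁻¹) ^ n * S * D y) := by
      conv_lhs => rw [← one_mul (D y), ← hone, huB]
      have : B = S + X ^ n * E := by rw [← hE]; ring
      rw [this]
      rw [mul_add, add_mul, map_add]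
      have hz : coeff (n-1) ((u⁻¹) ^ n * (X ^ n * E) * D y) = 0 := by
        apply X_pow_dvd_iff.mp _ _ (Nat.sub_lt hkpos Nat.one_pos)
        exact ⟨(u⁻¹) ^ n * E * D y, by ring⟩
      rw [hz, add_zero]
    have hterm : ∀ j ∈ Finset.range n,
        coeff (n-1) (C (bc σ j) * (-y) ^ j * ((u⁻¹) ^ n * D y)) =
          bc σ j * (-1 : RatFunc ℚ) ^ j * (if n - 1 - j = 0 then 1 else 0) := by
      intro j hj
      rw [Finset.mem_range] at hj
      have hterm_eq : C (bc σ j) * (-y) ^ j * ((u⁻¹) ^ n * D y) =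
          C (bc σ j * (-1) ^ j) * (X ^ j * ((u⁻¹) ^ (n - j) * D y)) := by
        have hnegy : (-y) ^ j = C ((-1) ^ j) * (X ^ j * u ^ j) := by
          rw [hyu, neg_pow, mul_pow]
          simp [map_pow, map_neg, map_one]
        have hcancel : u ^ j * (u⁻¹) ^ n = (u⁻¹) ^ (n - j) := by
          have : n = j + (n - j) := by omega
          rw [this, pow_add, ← mul_assoc, ← mul_pow, huv, one_pow, one_mul]
          congr 1
          omega
        rw [hnegy, map_mul]
        calc C (bc σ j) * (C ((-1) ^ j) * (X ^ j * u ^ j)) *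
              ((u⁻¹) ^ n * D y)
            = C (bc σ j) * C ((-1) ^ j) *
              (X ^ j * ((u ^ j * (u⁻¹) ^ n) * D y)) := by ring
          _ = _ := by rw [hcancel]
      rw [hterm_eq, coeff_C_mul, coeff_X_pow_mul' _ _ _]
      rw [if_pos (by omega : j ≤ n - 1)]
      have hexp : n - j = (n - 1 - j) + 1 := by omega
      rw [hexp, M6 (n - 1 - j)]
    have hDy : coeff (n-1) (D y) = bc σ (n-1) * (-1 : RatFunc ℚ) ^ (n-1) := by
      rw [hsplit]
      have : (u⁻¹) ^ n * S * D y =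
          ∑ j ∈ Finset.range n, C (bc σ j) * (-y) ^ j * ((u⁻¹) ^ n * D y) := by
        rw [Finset.mul_sum, Finset.sum_mul]
        exact Finset.sum_congr rfl fun j _ => by ring
      rw [this, map_sum, Finset.sum_congr rfl hterm]
      rw [Finset.sum_eq_single (n-1)]
      · rw [if_pos (by omega), mul_one]
      · intro j hj hne
        rw [Finset.mem_range] at hj
        rw [if_neg (by omega), mul_zero]
      · intro h
        exact absurd (Finset.mem_range.mpr (by omega)) h
    -- assemble
    have hcn : coeff n y * (n : RatFunc ℚ) =
        bc σ (n-1) * (-1 : RatFunc ℚ) ^ (n-1) := by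
      rw [← hDy]
      have h' : n - 1 + 1 = n := by omega
      have hcast : ((n - 1 : ℕ) : RatFunc ℚ) + 1 = (n : RatFunc ℚ) := by
        rw [Nat.cast_sub (by omega : 1 ≤ n)]
        ring
      rw [hDdef, coeff_derivative, h', hcast]
    -- final algebra
    have hprod : bc σ (n-1) * (-1 : RatFunc ℚ) ^ (n-1) =
        (∏ a ∈ Finset.range (n - 1), ((n : RatFunc ℚ) * τ + (a : RatFunc ℚ))) /
          ((Nat.factorial (n-1) : RatFunc ℚ)) := by
      have hneg : ∏ a ∈ Finset.range (n-1), (-((n : RatFunc ℚ) * τ) - (a : RatFunc ℚ)) =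
          (-1 : RatFunc ℚ) ^ (n-1) *
            ∏ a ∈ Finset.range (n-1), ((n : RatFunc ℚ) * τ + (a : RatFunc ℚ)) := by
        calc ∏ a ∈ Finset.range (n-1), (-((n : RatFunc ℚ) * τ) - (a : RatFunc ℚ))
            = ∏ a ∈ Finset.range (n-1), (-1 : RatFunc ℚ) *
                ((n : RatFunc ℚ) * τ + (a : RatFunc ℚ)) :=
              Finset.prod_congr rfl fun a _ => by ring
          _ = _ := by
              rw [Finset.prod_mul_distrib, Finset.prod_const, Finset.card_range]
      have hsq : ((-1 : RatFunc ℚ)) ^ (n-1) * (-1 : RatFunc ℚ) ^ (n-1) = 1 := by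
        rw [← pow_add, ← two_mul, pow_mul]
        norm_num
      rw [bc, hσ, hneg]
      set P := ∏ a ∈ Finset.range (n-1), ((n : RatFunc ℚ) * τ + (a : RatFunc ℚ))
      calc (-1 : RatFunc ℚ) ^ (n-1) * P / ((Nat.factorial (n-1) : RatFunc ℚ)) *
            (-1 : RatFunc ℚ) ^ (n-1)
          = P / ((Nat.factorial (n-1) : RatFunc ℚ)) *
              ((-1 : RatFunc ℚ) ^ (n-1) * (-1) ^ (n-1)) := by ring
        _ = P / ((Nat.factorial (n-1) : RatFunc ℚ)) := by rw [hsq, mul_one]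
    -- conclude
    have hfacne : ((Nat.factorial (n-1) : RatFunc ℚ)) ≠ 0 :=
      Nat.cast_ne_zero.mpr (Nat.factorial_ne_zero _)
    have hcn2 : coeff n y * (n : RatFunc ℚ) * (Nat.factorial (n-1) : RatFunc ℚ) =
        ∏ a ∈ Finset.range (n - 1), ((n : RatFunc ℚ) * τ + (a : RatFunc ℚ)) := by
      rw [hcn, hprod, div_mul_cancel₀ _ hfacne]
    rw [eq_div_iff (Nat.cast_ne_zero.mpr (Nat.factorial_ne_zero n) :
      ((Nat.factorial n : RatFunc ℚ)) ≠ 0)]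
    rw [← Nat.mul_factorial_pred hkpos.ne']
    push_cast
    rw [← hcn2]
    ring
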